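/- Let Φ = (V, 𝒬, 𝒞) be a CSP formula and x : 𝒞 → (0,1) a function such that for every c ∈ 𝒞, ℙ[¬c] ≤ x(c) · ∏_{c' ∈ 𝒞 : vbl(c) ∩ vbl(c') ≠ ∅} (1 − x(c')). Then for any event A ⊆ 𝒬 that is determined by the values of the variables in a subset vbl(A) ⊆ V, one has Pr_μ[A] = ℙ[A | ⋀_{c ∈ 𝒞} c] ≤ ℙ[A] · ∏_{c ∈ 𝒞 : vbl(c) ∩ vbl(A) ≠ ∅} (1 − x(c))^{−1}. -/

import Mathlib

open Finset

inductive PVal (α : Type) : Type where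
  | val (a : α)
  | star
  | unacc

structure CSP (V : Type) [Fintype V] [DecidableEq V] where
  Q : V → Type
  fintypeQ : ∀ v, Fintype (Q v)
  decEqQ : ∀ v, DecidableEq (Q v)
  card_two : ∀ v, 2 ≤ Fintype.card (Q v)
  C : Type
  fintypeC : Fintype C
  decEqC : DecidableEq C
  vbl : C → Finset V
  sat : C → ((v : V) → Q v) → Prop
  sat_local : ∀ c x y, (∀ v ∈ vbl c, x v = y v) → sat c x → sat c y

attribute [instance] CSP.fintypeQ CSP.decEqQ CSP.fintypeC CSP.decEqC

namespace CSP

variable {V : Type} [Fintype V] [DecidableEq V] (Φ : CSP V)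

/-- The space of (full) assignments `𝒬 = ∏_v Q_v`. -/
abbrev Assign := (v : V) → Φ.Q v

/-- Partial assignments `𝒬* = ∏_v (Q_v ∪ {⋆, ☆})`. -/
abbrev PAssign := (v : V) → PVal (Φ.Q v)

/-- A full assignment agrees with a partial assignment on all assigned variables. -/
def agrees (σ : Φ.PAssign) (x : Φ.Assign) : Prop :=
  ∀ (v : V) (a : Φ.Q v), σ v = PVal.val a → x v = a

/-- `v ∈ Λ(σ)` : the variable `v` is assigned a value from its domain in `σ`. -/
def assigned (σ : Φ.PAssign) (v : V) : Prop := ∃ a, σ v = PVal.val a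

/-- The set of satisfying assignments. -/
def Sat : Set Φ.Assign := {x | ∀ c, Φ.sat c x}

/-- The event `¬ c` that constraint `c` is violated. -/
def viol (c : Φ.C) : Set Φ.Assign := {x | ¬ Φ.sat c x}

/-- `ℙ[A]` : probability of the event `A` under the uniform product distribution. -/
noncomputable def prob (A : Set Φ.Assign) : ℝ :=
  (A.ncard : ℝ) / (Fintype.card Φ.Assign : ℝ)

/-- `ℙ[A | σ]` : probability of `A` under the uniform product distribution conditioned
on agreeing with `σ` on all assigned variables. -/
noncomputable def condProb (A : Set Φ.Assign) (σ : Φ.PAssign) : ℝ :=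
  ((A ∩ {x | Φ.agrees σ x}).ncard : ℝ) / (({x : Φ.Assign | Φ.agrees σ x}).ncard : ℝ)

/-- `Pr_μ[A]` : probability of `A` under the uniform distribution over satisfying assignments. -/
noncomputable def muProb (A : Set Φ.Assign) : ℝ :=
  ((A ∩ Φ.Sat).ncard : ℝ) / ((Φ.Sat.ncard : ℝ))

/-- the domain size `q`. -/
noncomputable def qmax : ℕ := Finset.univ.sup fun v : V => Fintype.card (Φ.Q v)

/-- the width `k`. -/
noncomputable def width : ℕ := Finset.univ.sup fun c : Φ.C => (Φ.vbl c).card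

/-- the dependency degree `Δ`. -/
noncomputable def degree : ℕ :=
  Finset.univ.sup fun c : Φ.C =>
    (Finset.univ.filter fun c' : Φ.C => c' ≠ c ∧ ((Φ.vbl c) ∩ (Φ.vbl c')).Nonempty).card

end CSP

namespace CSPAux

open CSP

variable {V : Type} [Fintype V] [DecidableEq V] (Φ : CSP V)

/-- The event that all constraints in `S` are satisfied. -/
def Good (S : Finset Φ.C) : Set Φ.Assign := {y | ∀ c ∈ S, Φ.sat c y}

/-- `A` is determined by the variables in `W`. -/
def Det (W : Finset V) (A : Set Φ.Assign) : Prop :=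
  ∀ a b : Φ.Assign, (∀ v ∈ W, a v = b v) → a ∈ A → b ∈ A

variable {Φ}

lemma card_assign_pos : 0 < Fintype.card Φ.Assign := by
  have : ∀ v, Nonempty (Φ.Q v) := fun v =>
    Fintype.card_pos_iff.mp (lt_of_lt_of_le (by norm_num) (Φ.card_two v))
  exact Fintype.card_pos

lemma prob_nonneg (A : Set Φ.Assign) : 0 ≤ Φ.prob A := by
  unfold CSP.prob; positivity

lemma prob_mono {A B : Set Φ.Assign} (hAB : A ⊆ B) : Φ.prob A ≤ Φ.prob B := by
  unfold CSP.prob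
  apply div_le_div_of_nonneg_right ?_ ?_ <;>
    [exact_mod_cast Set.ncard_le_ncard hAB B.toFinite; exact_mod_cast card_assign_pos.le]

lemma prob_univ : Φ.prob Set.univ = 1 := by
  unfold CSP.prob
  rw [Set.ncard_univ, Nat.card_eq_fintype_card, div_self]
  exact_mod_cast card_assign_pos.ne'

lemma good_empty : Good Φ (∅ : Finset Φ.C) = Set.univ := by
  ext y; simp [Good]

lemma good_anti {S T : Finset Φ.C} (hST : S ⊆ T) : Good Φ T ⊆ Good Φ S := by
  intro y hy c hc; exact hy c (hST hc)

lemma det_good (S : Finset Φ.C) : Det Φ (S.biUnion Φ.vbl) (Good Φ S) := by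
  intro a b hab ha c hc
  exact Φ.sat_local c a b (fun v hv => hab v (Finset.mem_biUnion.mpr ⟨c, hc, hv⟩)) (ha c hc)

lemma det_viol (c : Φ.C) : Det Φ (Φ.vbl c) (Φ.viol c) := by
  intro a b hab ha hb
  exact ha (Φ.sat_local c b a (fun v hv => (hab v hv).symm) hb)

lemma indep {Sv Tv : Finset V} {A B : Set Φ.Assign}
    (hA : Det Φ Sv A) (hB : Det Φ Tv B) (hdisj : Disjoint Sv Tv) :
    Φ.prob (A ∩ B) = Φ.prob A * Φ.prob B := by
  classical
  set e := Equiv.piEquivPiSubtypeProd (fun v => v ∈ Sv) Φ.Q with he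
  set A₁ : Set ((v : {v // v ∈ Sv}) → Φ.Q v) := {a | ∃ y, e.symm (a, y) ∈ A} with hA₁def
  set B₂ : Set ((v : {v // ¬ v ∈ Sv}) → Φ.Q v) := {b | ∃ y, e.symm (y, b) ∈ B} with hB₂def
  have hsymm : ∀ (a) (b) (v : V), (h : v ∈ Sv) → e.symm (a, b) v = a ⟨v, h⟩ := by
    intro a b v hv
    simp [he, Equiv.piEquivPiSubtypeProd_symm_apply, hv]
  have hsymm' : ∀ (a) (b) (v : V), (h : ¬ v ∈ Sv) → e.symm (a, b) v = b ⟨v, h⟩ := by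
    intro a b v hv
    simp [he, Equiv.piEquivPiSubtypeProd_symm_apply, hv]
  have hmemA : ∀ z : Φ.Assign, z ∈ A ↔ (e z).1 ∈ A₁ := by
    intro z
    constructor
    · intro hz
      refine ⟨(e z).2, ?_⟩
      rw [Prod.mk.eta, Equiv.symm_apply_apply]; exact hz
    · rintro ⟨y, hy⟩
      refine hA _ z (fun v hv => ?_) hy
      rw [hsymm _ _ v hv]; rfl
  have hmemB : ∀ z : Φ.Assign, z ∈ B ↔ (e z).2 ∈ B₂ := by
    intro z
    constructor
    · intro hz
      refine ⟨(e z).1, ?_⟩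
      rw [Prod.mk.eta, Equiv.symm_apply_apply]; exact hz
    · rintro ⟨y, hy⟩
      refine hB _ z (fun v hv => ?_) hy
      have hv' : ¬ v ∈ Sv := fun hc => (Finset.disjoint_left.mp hdisj hc) hv
      rw [hsymm' _ _ v hv']; rfl
  -- cardinality identities
  have hcard : ∀ (s : Set ((v : {v // v ∈ Sv}) → Φ.Q v)) (t : Set ((v : {v // ¬ v ∈ Sv}) → Φ.Q v)),
      (e ⁻¹' (s ×ˢ t)).ncard = s.ncard * t.ncard := by
    intro s t
    have h1 : e ⁻¹' (s ×ˢ t) = e.symm '' (s ×ˢ t) :=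
      (e.image_symm_eq_preimage _).symm
    rw [h1, Set.ncard_image_of_injective _ e.symm.injective]
    rw [← Nat.card_coe_set_eq, ← Nat.card_coe_set_eq, ← Nat.card_coe_set_eq]
    rw [Nat.card_congr (Equiv.Set.prod s t), Nat.card_prod]
  have hAeq : A = e ⁻¹' (A₁ ×ˢ Set.univ) := by
    ext z; simp [hmemA z, Set.mem_prod]
  have hBeq : B = e ⁻¹' (Set.univ ×ˢ B₂) := by
    ext z; simp [hmemB z, Set.mem_prod]
  have hABeq : A ∩ B = e ⁻¹' (A₁ ×ˢ B₂) := by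
    ext z; simp [hmemA z, hmemB z, Set.mem_prod]
  have hN : (Fintype.card Φ.Assign : ℕ) =
      Fintype.card ((v : {v // v ∈ Sv}) → Φ.Q v) * Fintype.card ((v : {v // ¬ v ∈ Sv}) → Φ.Q v) := by
    rw [Fintype.card_congr e, Fintype.card_prod]
  unfold CSP.prob
  rw [hABeq, hAeq, hBeq, hcard, hcard, hcard, Set.ncard_univ, Set.ncard_univ,
    Nat.card_eq_fintype_card, Nat.card_eq_fintype_card, hN]
  push_cast
  have hQ : ∀ v, Nonempty (Φ.Q v) := fun v =>
    Fintype.card_pos_iff.mp (lt_of_lt_of_le (by norm_num) (Φ.card_two v))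
  have p1 : (0:ℝ) < Fintype.card ((v : {v // v ∈ Sv}) → Φ.Q v) := by
    exact_mod_cast Fintype.card_pos
  have p2 : (0:ℝ) < Fintype.card ((v : {v // ¬ v ∈ Sv}) → Φ.Q v) := by
    exact_mod_cast Fintype.card_pos
  field_simp

lemma prob_insert (c : Φ.C) (U : Finset Φ.C) :
    Φ.prob (Good Φ U) = Φ.prob (Good Φ (insert c U)) + Φ.prob (Φ.viol c ∩ Good Φ U) := by
  have hunion : Good Φ U = Good Φ (insert c U) ∪ (Φ.viol c ∩ Good Φ U) := by
    ext y
    by_cases hy : Φ.sat c y <;>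
      simp [Good, CSP.viol, hy, Set.mem_union, Set.mem_inter_iff] <;> tauto
  have hdisj : Disjoint (Good Φ (insert c U)) (Φ.viol c ∩ Good Φ U) := by
    rw [Set.disjoint_left]
    rintro y hy ⟨hv, _⟩
    exact hv (hy c (Finset.mem_insert_self c U))
  have huc := Set.ncard_union_eq hdisj (Set.toFinite _) (Set.toFinite _)
  have hn : (Good Φ U).ncard = (Good Φ (insert c U)).ncard + (Φ.viol c ∩ Good Φ U).ncard := by
    conv_lhs => rw [hunion]
    exact huc
  unfold CSP.prob
  rw [hn]
  push_cast
  ring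

variable {x : Φ.C → ℝ} (hx : ∀ c, x c ∈ Set.Ioo (0 : ℝ) 1)

include hx

/-- chain bound assuming the core inequality for small sets. -/
lemma chain_aux (n : ℕ)
    (IH : ∀ S : Finset Φ.C, S.card ≤ n → ∀ c,
      Φ.prob (Φ.viol c ∩ Good Φ S) ≤ x c * Φ.prob (Good Φ S)) :
    ∀ T S : Finset Φ.C, (T ∪ S).card ≤ n + 1 →
      (∏ c ∈ T, (1 - x c)) * Φ.prob (Good Φ S) ≤ Φ.prob (Good Φ (T ∪ S)) := by
  intro T
  induction T using Finset.induction with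
  | empty => intro S _; simp
  | @insert c T hc IHT =>
    intro S hcard
    have h0 : 0 ≤ 1 - x c := by have := (hx c).2; linarith
    have h1 : 1 - x c ≤ 1 := by have := (hx c).1; linarith
    have h2 : 0 ≤ ∏ c' ∈ T, (1 - x c') :=
      Finset.prod_nonneg fun c' _ => by have := (hx c').2; linarith
    have h3 : 0 ≤ Φ.prob (Good Φ S) := prob_nonneg _
    by_cases hcS : c ∈ S
    · have heq : insert c T ∪ S = T ∪ S := by
        rw [Finset.insert_union, Finset.insert_eq_self.mpr (Finset.mem_union_right T hcS)]
      rw [heq]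
      calc (∏ c' ∈ insert c T, (1 - x c')) * Φ.prob (Good Φ S)
          ≤ (∏ c' ∈ T, (1 - x c')) * Φ.prob (Good Φ S) := by
            rw [Finset.prod_insert hc, mul_assoc]
            exact mul_le_of_le_one_left (mul_nonneg h2 h3) h1
        _ ≤ Φ.prob (Good Φ (T ∪ S)) := IHT S (by rw [← heq]; exact hcard)
    · have hU : insert c T ∪ S = insert c (T ∪ S) := by rw [Finset.insert_union]
      have hcU : c ∉ T ∪ S := by simp [hc, hcS]
      have hcard' : (T ∪ S).card ≤ n := by
        have h4 : (insert c (T ∪ S)).card = (T ∪ S).card + 1 := Finset.card_insert_of_notMem hcU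
        rw [hU] at hcard
        omega
      rw [hU, Finset.prod_insert hc, mul_assoc]
      have hTS : (∏ c' ∈ T, (1 - x c')) * Φ.prob (Good Φ S) ≤ Φ.prob (Good Φ (T ∪ S)) :=
        IHT S (le_trans hcard' (Nat.le_succ n))
      calc (1 - x c) * ((∏ c' ∈ T, (1 - x c')) * Φ.prob (Good Φ S))
          ≤ (1 - x c) * Φ.prob (Good Φ (T ∪ S)) := mul_le_mul_of_nonneg_left hTS h0
        _ ≤ Φ.prob (Good Φ (insert c (T ∪ S))) := by
            have hins := prob_insert (Φ := Φ) c (T ∪ S)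
            have hstep := IH (T ∪ S) hcard' c
            nlinarith [prob_nonneg (Φ := Φ) (Good Φ (T ∪ S))]

variable (h : ∀ c, Φ.prob (Φ.viol c) ≤
      x c * ∏ c' ∈ Finset.univ.filter
        (fun c' : Φ.C => ((Φ.vbl c) ∩ (Φ.vbl c')).Nonempty), (1 - x c'))

include h

lemma prod_one_sub_le_one {U : Finset Φ.C} : ∏ c' ∈ U, (1 - x c') ≤ 1 :=
  Finset.prod_le_one (fun c' _ => by have := (hx c').2; linarith)
    (fun c' _ => by have := (hx c').1; linarith)

lemma prod_le_sub {S₁ U : Finset Φ.C} (hsub : S₁ ⊆ U) :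
    ∏ c' ∈ U, (1 - x c') ≤ ∏ c' ∈ S₁, (1 - x c') := by
  rw [← Finset.prod_sdiff hsub]
  have h1 : ∏ c' ∈ U \ S₁, (1 - x c') ≤ 1 :=
    Finset.prod_le_one (fun c' _ => by have := (hx c').2; linarith)
      (fun c' _ => by have := (hx c').1; linarith)
  have h2 : 0 ≤ ∏ c' ∈ S₁, (1 - x c') :=
    Finset.prod_nonneg fun c' _ => by have := (hx c').2; linarith
  exact mul_le_of_le_one_left h2 h1 |>.trans_eq rfl

lemma core_aux : ∀ n : ℕ, ∀ S : Finset Φ.C, S.card ≤ n → ∀ c,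
    Φ.prob (Φ.viol c ∩ Good Φ S) ≤ x c * Φ.prob (Good Φ S) := by
  intro n
  induction n with
  | zero =>
    intro S hS c
    rw [Finset.card_eq_zero.mp (Nat.le_zero.mp hS), good_empty, Set.inter_univ, prob_univ,
      mul_one]
    calc Φ.prob (Φ.viol c) ≤ x c * ∏ c' ∈ Finset.univ.filter
          (fun c' : Φ.C => ((Φ.vbl c) ∩ (Φ.vbl c')).Nonempty), (1 - x c') := h c
      _ ≤ x c * 1 :=
        mul_le_mul_of_nonneg_left (prod_one_sub_le_one (Φ := Φ) hx h) (hx c).1.le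
      _ = x c := mul_one _
  | succ n IHn =>
    intro S hS c
    set S₁ := S.filter (fun c' => ((Φ.vbl c) ∩ (Φ.vbl c')).Nonempty) with hS₁
    set S₂ := S.filter (fun c' => ¬ ((Φ.vbl c) ∩ (Φ.vbl c')).Nonempty) with hS₂
    have hunion : S₁ ∪ S₂ = S := Finset.filter_union_filter_not_eq _ S
    have hmono : Φ.prob (Φ.viol c ∩ Good Φ S) ≤ Φ.prob (Φ.viol c ∩ Good Φ S₂) :=
      prob_mono (Set.inter_subset_inter_right _ (good_anti (Finset.filter_subset _ S)))
    have hdisjv : Disjoint (Φ.vbl c) (S₂.biUnion Φ.vbl) := by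
      rw [Finset.disjoint_biUnion_right]
      intro c' hc'
      rw [Finset.disjoint_iff_inter_eq_empty, ← Finset.not_nonempty_iff_eq_empty]
      exact (Finset.mem_filter.mp hc').2
    have hind : Φ.prob (Φ.viol c ∩ Good Φ S₂) = Φ.prob (Φ.viol c) * Φ.prob (Good Φ S₂) :=
      indep (det_viol c) (det_good S₂) hdisjv
    have hchain : (∏ c' ∈ S₁, (1 - x c')) * Φ.prob (Good Φ S₂) ≤ Φ.prob (Good Φ S) := by
      have := chain_aux hx n IHn S₁ S₂ (by rw [hunion]; exact hS)
      rwa [hunion] at this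
    have hviol : Φ.prob (Φ.viol c) ≤ x c * ∏ c' ∈ S₁, (1 - x c') :=
      le_trans (h c) (mul_le_mul_of_nonneg_left
        (prod_le_sub (Φ := Φ) hx h (fun c' hc' => by
          simp only [Finset.mem_filter, Finset.mem_univ, true_and]
          exact (Finset.mem_filter.mp hc').2)) (hx c).1.le)
    have hG2 : 0 ≤ Φ.prob (Good Φ S₂) := prob_nonneg _
    calc Φ.prob (Φ.viol c ∩ Good Φ S)
        ≤ Φ.prob (Φ.viol c) * Φ.prob (Good Φ S₂) := by rw [← hind]; exact hmono
      _ ≤ (x c * ∏ c' ∈ S₁, (1 - x c')) * Φ.prob (Good Φ S₂) :=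
          mul_le_mul_of_nonneg_right hviol hG2
      _ = x c * ((∏ c' ∈ S₁, (1 - x c')) * Φ.prob (Good Φ S₂)) := by ring
      _ ≤ x c * Φ.prob (Good Φ S) := mul_le_mul_of_nonneg_left hchain (hx c).1.le

lemma core (S : Finset Φ.C) (c : Φ.C) :
    Φ.prob (Φ.viol c ∩ Good Φ S) ≤ x c * Φ.prob (Good Φ S) :=
  core_aux hx h S.card S le_rfl c

lemma chain (T S : Finset Φ.C) :
    (∏ c ∈ T, (1 - x c)) * Φ.prob (Good Φ S) ≤ Φ.prob (Good Φ (T ∪ S)) :=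
  chain_aux hx (T ∪ S).card (fun S' _ c => core hx h S' c) T S (Nat.le_succ _)

lemma prod_one_sub_pos (U : Finset Φ.C) : 0 < ∏ c' ∈ U, (1 - x c') :=
  Finset.prod_pos fun c' _ => by have := (hx c').2; linarith

lemma good_pos (S : Finset Φ.C) : 0 < Φ.prob (Good Φ S) := by
  have := chain hx h S ∅
  rw [Finset.union_empty, good_empty, prob_univ, mul_one] at this
  exact lt_of_lt_of_le (prod_one_sub_pos hx h S) this

end CSPAux

/-- **Haeupler–Saha–Srinivasan bound.**
Under the Lovász Local Lemma condition, for any event `A` determined by the variables of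
`vblA`, one has `Pr_μ[A] = ℙ[A | ⋀_c c] ≤ ℙ[A] · ∏_{c : vbl(c) ∩ vbl(A) ≠ ∅} (1 − x(c))⁻¹`. -/
theorem statement1 {V : Type} [Fintype V] [DecidableEq V] (Φ : CSP V)
    (x : Φ.C → ℝ) (hx : ∀ c, x c ∈ Set.Ioo (0 : ℝ) 1)
    (h : ∀ c, Φ.prob (Φ.viol c) ≤
      x c * ∏ c' ∈ Finset.univ.filter
        (fun c' : Φ.C => ((Φ.vbl c) ∩ (Φ.vbl c')).Nonempty), (1 - x c'))
    (A : Set Φ.Assign) (vblA : Finset V)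
    (hA : ∀ a b : Φ.Assign, (∀ v ∈ vblA, a v = b v) → a ∈ A → b ∈ A) :
    Φ.muProb A = Φ.prob (A ∩ Φ.Sat) / Φ.prob Φ.Sat ∧
    Φ.muProb A ≤ Φ.prob A *
      ∏ c ∈ Finset.univ.filter (fun c : Φ.C => ((Φ.vbl c) ∩ vblA).Nonempty), (1 - x c)⁻¹ := by

  classical
  open CSPAux in
  have hSatEq : Φ.Sat = Good Φ Finset.univ := by
    ext y; simp [CSP.Sat, CSPAux.Good]
  have hSpos : 0 < Φ.prob Φ.Sat := by
    rw [hSatEq]; exact CSPAux.good_pos hx h _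
  have hNpos : (0:ℝ) < (Fintype.card Φ.Assign : ℝ) := by
    exact_mod_cast CSPAux.card_assign_pos (Φ := Φ)
  have hsn : ((Φ.Sat.ncard : ℝ)) ≠ 0 := by
    intro h0
    rw [CSP.prob, h0, zero_div] at hSpos
    exact lt_irrefl _ hSpos
  have hfirst : Φ.muProb A = Φ.prob (A ∩ Φ.Sat) / Φ.prob Φ.Sat := by
    rw [CSP.muProb, CSP.prob, CSP.prob, div_div_div_cancel_right₀ hNpos.ne']
  refine ⟨hfirst, ?_⟩
  set Γ := Finset.univ.filter (fun c : Φ.C => ((Φ.vbl c) ∩ vblA).Nonempty) with hΓ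
  set Γc := Finset.univ.filter (fun c : Φ.C => ¬ ((Φ.vbl c) ∩ vblA).Nonempty) with hΓc
  have hunion : Γ ∪ Γc = Finset.univ := Finset.filter_union_filter_not_eq _ _
  have hsub : A ∩ Φ.Sat ⊆ A ∩ CSPAux.Good Φ Γc := by
    rw [hSatEq]
    exact Set.inter_subset_inter_right _ (CSPAux.good_anti (Finset.subset_univ Γc))
  have hdisjv : Disjoint vblA (Γc.biUnion Φ.vbl) := by
    rw [Finset.disjoint_biUnion_right]
    intro c hc
    have := (Finset.mem_filter.mp hc).2
    rw [Finset.not_nonempty_iff_eq_empty] at this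
    rw [Finset.disjoint_iff_inter_eq_empty, Finset.inter_comm]
    exact this
  have hindep : Φ.prob (A ∩ CSPAux.Good Φ Γc) = Φ.prob A * Φ.prob (CSPAux.Good Φ Γc) :=
    CSPAux.indep (fun a b hab ha => hA a b hab ha) (CSPAux.det_good Γc) hdisjv
  have hchain : (∏ c ∈ Γ, (1 - x c)) * Φ.prob (CSPAux.Good Φ Γc) ≤ Φ.prob Φ.Sat := by
    have := CSPAux.chain hx h Γ Γc
    rwa [hunion, ← hSatEq] at this
  have hPpos : 0 < ∏ c ∈ Γ, (1 - x c) := CSPAux.prod_one_sub_pos hx h Γ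
  have hGpos : 0 < Φ.prob (CSPAux.Good Φ Γc) := CSPAux.good_pos hx h Γc
  have hPA : 0 ≤ Φ.prob A := CSPAux.prob_nonneg _
  rw [hfirst, div_le_iff₀ hSpos]
  have hinv : ∏ c ∈ Γ, (1 - x c)⁻¹ = (∏ c ∈ Γ, (1 - x c))⁻¹ := by
    rw [Finset.prod_inv_distrib]
  rw [hinv]
  calc Φ.prob (A ∩ Φ.Sat) ≤ Φ.prob (A ∩ CSPAux.Good Φ Γc) := CSPAux.prob_mono hsub
    _ = Φ.prob A * Φ.prob (CSPAux.Good Φ Γc) := hindep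
    _ = Φ.prob A * (∏ c ∈ Γ, (1 - x c))⁻¹ *
        ((∏ c ∈ Γ, (1 - x c)) * Φ.prob (CSPAux.Good Φ Γc)) := by
        field_simp
    _ ≤ Φ.prob A * (∏ c ∈ Γ, (1 - x c))⁻¹ * Φ.prob Φ.Sat :=
        mul_le_mul_of_nonneg_left hchain (by positivity)
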